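/- Let 𝒮 be an η-sparse family of intervals in ℝ (i.e., for each I ∈ 𝒮 there is a measurable E_I ⊂ I with |E_I| ≥ η|I| and the E_I pairwise disjoint). Then for every 1 < r < ∞ and all locally integrable F, G, the sparse form Λ_𝒮(F,G) := Σ_{I ∈ 𝒮} ⟨|F|⟩_I ⟨|G|⟩_I |I| satisfies Λ_𝒮(F,G) ≤ C(r,η) ‖F‖_{L^r(ℝ)} ‖G‖_{L^{r'}(ℝ)}, where 1/r + 1/r' = 1 and ⟨H⟩_I denotes the average of H over I. -/

import Mathlib

open MeasureTheory Set ENNReal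


lemma geom_tail {r : ℝ} (hr : 1 < r) :
    ∃ c : ℝ≥0∞, c ≠ ⊤ ∧ ∀ t : ℝ≥0∞, t ≠ ⊤ →
      (∑' k : ℤ, (2:ℝ≥0∞) ^ ((k:ℝ)*(r-1) + (r+4)) * (if (2:ℝ≥0∞) ^ ((k:ℝ)-2) < t then t else 0))
        ≤ c * t ^ r := by
  have h2t : (2:ℝ≥0∞) ≠ ⊤ := by simp
  have h20 : (2:ℝ≥0∞) ≠ 0 := by simp
  have h12 : (1:ℝ≥0∞) < 2 := by norm_num
  set ρ : ℝ≥0∞ := (2:ℝ≥0∞) ^ (1-r) with hρ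
  have hρ1 : ρ < 1 := by
    have := ENNReal.rpow_lt_rpow_of_exponent_lt h12 h2t (by linarith : 1-r < 0)
    simpa using this
  have hgeom : (1 - ρ)⁻¹ ≠ ⊤ := by
    simp only [ne_eq, ENNReal.inv_eq_top]
    exact (tsub_pos_of_lt hρ1).ne'
  refine ⟨(4:ℝ≥0∞) ^ (r-1) * (2:ℝ≥0∞) ^ (r+4) * (1 - ρ)⁻¹, ?_, ?_⟩
  · exact ENNReal.mul_ne_top (ENNReal.mul_ne_top
      (ENNReal.rpow_ne_top_of_nonneg (by linarith) (by simp))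
      (ENNReal.rpow_ne_top_of_nonneg (by linarith) h2t)) hgeom
  intro t ht
  rcases eq_or_ne t 0 with rfl | ht0
  · simp
  obtain ⟨n, hn1, hn2⟩ := ENNReal.exists_mem_Ico_zpow ht0 ht h12 h2t
  set K : ℤ := n + 2 with hK
  have hsupp : Function.support (fun k : ℤ =>
      (2:ℝ≥0∞) ^ ((k:ℝ)*(r-1) + (r+4)) * (if (2:ℝ≥0∞) ^ ((k:ℝ)-2) < t then t else 0))
      ⊆ Set.range (fun m : ℕ => K - (m:ℤ)) := by
    intro k hk
    have hklt : (2:ℝ≥0∞) ^ ((k:ℝ)-2) < t := by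
      by_contra h
      simp [h] at hk
    have hkK : k ≤ K := by
      have h1 : (2:ℝ≥0∞) ^ ((k:ℝ)-2) < (2:ℝ≥0∞) ^ ((n:ℝ)+1) := by
        refine hklt.trans_le ?_
        have : (2:ℝ≥0∞) ^ (n+1 : ℤ) = (2:ℝ≥0∞) ^ ((n:ℝ)+1) := by
          rw [← ENNReal.rpow_intCast]; push_cast; ring_nf
        exact this ▸ hn2.le
      have h2 : (k:ℝ) - 2 < (n:ℝ) + 1 := by
        by_contra h
        exact absurd (ENNReal.rpow_le_rpow_of_exponent_le h12.le (not_lt.mp h)) h1.not_ge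
      have : (k:ℝ) < (K:ℝ) + 1 := by push_cast [hK]; linarith
      exact_mod_cast Int.lt_add_one_iff.mp (by exact_mod_cast this)
    refine ⟨(K - k).toNat, ?_⟩
    show K - ((K - k).toNat : ℤ) = k
    omega
  have hinj : Function.Injective (fun m : ℕ => K - (m:ℤ)) := by
    intro x y h; simpa using h
  rw [← Function.Injective.tsum_eq hinj hsupp]
  have step1 : (∑' m : ℕ, (2:ℝ≥0∞) ^ ((↑(K - (m:ℤ)) : ℝ)*(r-1) + (r+4)) *
        (if (2:ℝ≥0∞) ^ ((↑(K - (m:ℤ)) : ℝ)-2) < t then t else 0))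
      ≤ ∑' m : ℕ, ((2:ℝ≥0∞) ^ ((K:ℝ)*(r-1) + (r+4)) * ρ ^ m) * t := by
    refine ENNReal.tsum_le_tsum (fun m => ?_)
    have he : (2:ℝ≥0∞) ^ ((↑(K - (m:ℤ)) : ℝ)*(r-1) + (r+4))
        = (2:ℝ≥0∞) ^ ((K:ℝ)*(r-1) + (r+4)) * ρ ^ m := by
      have hexp : (↑(K - (m:ℤ)) : ℝ)*(r-1) + (r+4)
          = ((K:ℝ)*(r-1) + (r+4)) + (1-r) * (m:ℝ) := by push_cast; ring
      rw [hexp, ENNReal.rpow_add _ _ h20 h2t, hρ, ENNReal.rpow_mul, ENNReal.rpow_natCast]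
    rw [he]
    split_ifs
    · exact le_rfl
    · simp
  refine step1.trans ?_
  have hsum : ∑' m : ℕ, ((2:ℝ≥0∞) ^ ((K:ℝ)*(r-1) + (r+4)) * ρ ^ m) * t
      = (2:ℝ≥0∞) ^ ((K:ℝ)*(r-1) + (r+4)) * (1-ρ)⁻¹ * t := by
    rw [ENNReal.tsum_mul_right, ENNReal.tsum_mul_left, ENNReal.tsum_geometric]
  rw [hsum]
  have h2K : (2:ℝ≥0∞) ^ ((K:ℝ)) ≤ 4 * t := by
    have h4 : (2:ℝ≥0∞) ^ ((K:ℝ)) = 4 * (2:ℝ≥0∞) ^ (n:ℤ) := by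
      have e4 : (4:ℝ≥0∞) = 2 ^ (2:ℝ) := by
        rw [show (2:ℝ) = ((2:ℕ):ℝ) by norm_num, ENNReal.rpow_natCast]; norm_num
      rw [← ENNReal.rpow_intCast 2 n, e4, ← ENNReal.rpow_add _ _ h20 h2t]
      congr 1
      push_cast [hK]; ring
    rw [h4]
    exact mul_le_mul_right hn1 4
  have hKr : (2:ℝ≥0∞) ^ ((K:ℝ)*(r-1)) ≤ (4:ℝ≥0∞)^(r-1) * t^(r-1) := by
    rw [ENNReal.rpow_mul]
    calc ((2:ℝ≥0∞) ^ ((K:ℝ))) ^ (r-1) ≤ (4*t) ^ (r-1) :=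
          ENNReal.rpow_le_rpow h2K (by linarith)
      _ = (4:ℝ≥0∞)^(r-1) * t^(r-1) := ENNReal.mul_rpow_of_nonneg _ _ (by linarith)
  calc (2:ℝ≥0∞) ^ ((K:ℝ)*(r-1) + (r+4)) * (1-ρ)⁻¹ * t
      = ((2:ℝ≥0∞) ^ ((K:ℝ)*(r-1)) * (2:ℝ≥0∞) ^ (r+4)) * (1-ρ)⁻¹ * t := by
        rw [ENNReal.rpow_add _ _ h20 h2t]
    _ ≤ (((4:ℝ≥0∞)^(r-1) * t^(r-1)) * (2:ℝ≥0∞) ^ (r+4)) * (1-ρ)⁻¹ * t := by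
        gcongr
    _ = (4:ℝ≥0∞) ^ (r-1) * (2:ℝ≥0∞) ^ (r+4) * (1 - ρ)⁻¹ * (t ^ (r-1) * t) := by
        ring
    _ = (4:ℝ≥0∞) ^ (r-1) * (2:ℝ≥0∞) ^ (r+4) * (1 - ρ)⁻¹ * t ^ r := by
        congr 1
        nth_rewrite 2 [← ENNReal.rpow_one t]
        rw [← ENNReal.rpow_add _ _ ht0 ht]
        norm_num


lemma weak_bound (a b : ℕ → ℝ) (hab : ∀ i, a i ≤ b i) (φ : ℝ → ℝ≥0∞)
    (hφfin : ∫⁻ x, φ x ≠ ⊤) (lam : ℝ≥0∞) (hl0 : lam ≠ 0) (hlt : lam ≠ ⊤)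
    (T : Set ℕ)
    (hT : ∀ i ∈ T, lam * ENNReal.ofReal (b i - a i) ≤ ∫⁻ t in Set.Icc (a i) (b i), φ t) :
    volume (⋃ i ∈ T, Set.Icc (a i) (b i)) ≤ 8 / lam * ∫⁻ x, φ x := by
  -- each interval has controlled length
  have hIlt : ∀ i ∈ T, ENNReal.ofReal (b i - a i) ≤ (∫⁻ t in Set.Icc (a i) (b i), φ t) / lam := by
    intro i hi
    rw [ENNReal.le_div_iff_mul_le (Or.inl hl0) (Or.inl hlt), mul_comm]
    exact hT i hi
  have hIle : ∀ i ∈ T, ENNReal.ofReal (b i - a i) ≤ (∫⁻ x, φ x) / lam := by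
    intro i hi
    exact le_trans (hIlt i hi) (by gcongr; exact Measure.restrict_le_self)
  have hRfin : (∫⁻ x, φ x) / lam ≠ ⊤ := (ENNReal.div_lt_top hφfin hl0).ne
  set R : ℝ := ((∫⁻ x, φ x) / lam).toReal with hR
  have hrad : ∀ i ∈ T, (b i - a i)/2 ≤ R/2 + 1 := by
    intro i hi
    have := (ENNReal.ofReal_le_iff_le_toReal hRfin).mp (hIle i hi)
    linarith
  obtain ⟨u, huT, hudisj, hucov⟩ :=
    Vitali.exists_disjoint_subfamily_covering_enlargement_closedBall T
      (fun i => (a i + b i)/2) (fun i => (b i - a i)/2) (R/2 + 1) hrad 4 (by norm_num)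
  have hball : ∀ i, Metric.closedBall ((a i + b i)/2) ((b i - a i)/2) = Set.Icc (a i) (b i) := by
    intro i
    rw [Real.closedBall_eq_Icc]
    congr 1 <;> ring
  -- covering
  have hcov : (⋃ i ∈ T, Set.Icc (a i) (b i)) ⊆
      ⋃ j ∈ u, Metric.closedBall ((a j + b j)/2) (4 * ((b j - a j)/2)) := by
    intro x hx
    simp only [Set.mem_iUnion] at hx ⊢
    obtain ⟨i, hi, hxi⟩ := hx
    obtain ⟨j, hj, hsub⟩ := hucov i hi
    exact ⟨j, hj, hsub (by rw [hball i]; exact hxi)⟩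
  calc volume (⋃ i ∈ T, Set.Icc (a i) (b i))
      ≤ volume (⋃ j ∈ u, Metric.closedBall ((a j + b j)/2) (4 * ((b j - a j)/2))) :=
        measure_mono hcov
    _ ≤ ∑' j : u, volume (Metric.closedBall ((a (j:ℕ) + b (j:ℕ))/2) (4 * ((b (j:ℕ) - a (j:ℕ))/2))) :=
        measure_biUnion_le volume u.to_countable _
    _ ≤ ∑' j : u, (8/lam) * ∫⁻ t in Set.Icc (a (j:ℕ)) (b (j:ℕ)), φ t := by
        refine ENNReal.tsum_le_tsum (fun j => ?_)
        have hvol : volume (Metric.closedBall ((a (j:ℕ) + b (j:ℕ))/2) (4 * ((b (j:ℕ) - a (j:ℕ))/2)))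
            = ENNReal.ofReal 8 * ENNReal.ofReal ((b (j:ℕ) - a (j:ℕ))/2) := by
          rw [Real.volume_closedBall, ← ENNReal.ofReal_mul (by norm_num)]
          ring_nf
        rw [hvol]
        have h2 : ENNReal.ofReal ((b (j:ℕ) - a (j:ℕ))/2) ≤ ENNReal.ofReal (b (j:ℕ) - a (j:ℕ)) := by
          apply ENNReal.ofReal_le_ofReal
          have := hab (j:ℕ)
          linarith
        have h3 : ENNReal.ofReal (b (j:ℕ) - a (j:ℕ))
            ≤ (∫⁻ t in Set.Icc (a (j:ℕ)) (b (j:ℕ)), φ t) / lam := hIlt _ (huT j.2)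
        calc ENNReal.ofReal 8 * ENNReal.ofReal ((b (j:ℕ) - a (j:ℕ))/2)
            ≤ ENNReal.ofReal 8 * ((∫⁻ t in Set.Icc (a (j:ℕ)) (b (j:ℕ)), φ t) / lam) := by
              exact mul_le_mul_right (h2.trans h3) _
          _ = (8/lam) * ∫⁻ t in Set.Icc (a (j:ℕ)) (b (j:ℕ)), φ t := by
              rw [div_eq_mul_inv, div_eq_mul_inv]
              have : ENNReal.ofReal 8 = (8:ℝ≥0∞) := by norm_num
              rw [this]; ring
    _ = (8/lam) * ∑' j : u, ∫⁻ t in Set.Icc (a (j:ℕ)) (b (j:ℕ)), φ t := ENNReal.tsum_mul_left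
    _ ≤ (8/lam) * ∫⁻ x, φ x := by
        gcongr
        have hdisj : Pairwise (Function.onFun Disjoint (fun j : u => Set.Icc (a (j:ℕ)) (b (j:ℕ)))) := by
          intro x y hxy
          have := hudisj x.2 y.2 (fun h => hxy (Subtype.ext h))
          simpa [Function.onFun, hball] using this
        rw [← lintegral_iUnion (fun j : u => measurableSet_Icc) hdisj]
        exact setLIntegral_le_lintegral _ _

lemma carleson {r : ℝ} (hr : 1 < r) :
    ∃ C : ℝ≥0∞, C ≠ ⊤ ∧ ∀ (a b : ℕ → ℝ), (∀ i, a i ≤ b i) → ∀ (E : ℕ → Set ℝ),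
      (∀ i, MeasurableSet (E i)) → (∀ i, E i ⊆ Set.Icc (a i) (b i)) →
      Pairwise (Function.onFun Disjoint E) → ∀ (F : ℝ → ℝ), Measurable F →
      (∫⁻ x, (‖F x‖₊ : ℝ≥0∞) ^ r) ≠ ⊤ →
      ∑' i : ℕ, ((∫⁻ t in Set.Icc (a i) (b i), (‖F t‖₊:ℝ≥0∞)) / ENNReal.ofReal (b i - a i)) ^ r
          * volume (E i)
        ≤ C * ∫⁻ x, (‖F x‖₊ : ℝ≥0∞) ^ r := by
  classical
  have hr0 : (0:ℝ) < r := by linarith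
  have h20 : (2:ℝ≥0∞) ≠ 0 := by simp
  have h2t : (2:ℝ≥0∞) ≠ ⊤ := by simp
  have h12 : (1:ℝ≥0∞) < 2 := by norm_num
  obtain ⟨c, hc, hgt⟩ := geom_tail hr
  refine ⟨c, hc, ?_⟩
  intro a b hab E hEm hEsub hEdisj F hF hFr
  set N : ℝ → ℝ≥0∞ := fun x => (‖F x‖₊ : ℝ≥0∞) with hNdef
  have hNm : Measurable N := hF.nnnorm.coe_nnreal_ennreal
  have hNt : ∀ x, N x ≠ ⊤ := fun x => ENNReal.coe_ne_top
  set A : ℕ → ℝ≥0∞ := fun i =>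
    (∫⁻ t in Set.Icc (a i) (b i), N t) / ENNReal.ofReal (b i - a i) with hAdef
  -- finiteness of the averages
  have hIfin : ∀ i, ENNReal.ofReal (b i - a i) ≠ ⊤ := fun i => ENNReal.ofReal_ne_top
  have hIvol : ∀ i, volume (Set.Icc (a i) (b i)) = ENNReal.ofReal (b i - a i) := by
    intro i; rw [Real.volume_Icc]
  have hintfin : ∀ i, (∫⁻ t in Set.Icc (a i) (b i), N t) ≠ ⊤ := by
    intro i
    have hconj : r.HolderConjugate r.conjExponent := Real.HolderConjugate.conjExponent hr
    have hH := ENNReal.lintegral_mul_le_Lp_mul_Lq (volume.restrict (Set.Icc (a i) (b i))) hconj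
      hNm.aemeasurable (aemeasurable_const (b := (1:ℝ≥0∞)))
    simp only [Pi.mul_apply, mul_one, ENNReal.one_rpow] at hH
    refine ne_top_of_le_ne_top ?_ hH
    apply ENNReal.mul_ne_top
    · apply ENNReal.rpow_ne_top_of_nonneg (one_div_nonneg.mpr hconj.nonneg)
      refine ne_top_of_le_ne_top hFr ?_
      exact setLIntegral_le_lintegral _ _
    · apply ENNReal.rpow_ne_top_of_nonneg
        (one_div_nonneg.mpr hconj.symm.nonneg)
      rw [setLIntegral_one, hIvol i]
      exact hIfin i
  have hAfin : ∀ i, A i ≠ ⊤ := by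
    intro i
    rcases eq_or_ne (ENNReal.ofReal (b i - a i)) 0 with h0 | h0
    · have : volume (Set.Icc (a i) (b i)) = 0 := by rw [hIvol i, h0]
      have hz : (∫⁻ t in Set.Icc (a i) (b i), N t) = 0 := by
        rw [Measure.restrict_eq_zero.mpr this]; simp
      simp [hAdef, hz]
    · exact (ENNReal.div_lt_top (hintfin i) h0).ne
  have h2pnt : ∀ y : ℝ, (2:ℝ≥0∞) ^ y ≠ ⊤ := fun y => by
    simp [ENNReal.rpow_eq_top_iff]
  have h2pp : ∀ y : ℝ, (0:ℝ≥0∞) < (2:ℝ≥0∞) ^ y := fun y =>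
    ENNReal.rpow_pos (by norm_num) h2t
  set cond : ℤ → ℕ → Prop := fun k i =>
    (2:ℝ≥0∞) ^ ((k:ℝ)) ≤ A i ∧ A i < (2:ℝ≥0∞) ^ ((k:ℝ)+1) with hconddef
  have h1 : ∀ i, A i ^ r * volume (E i) ≤
      ∑' k : ℤ, (if cond k i then A i ^ r * volume (E i) else 0) := by
    intro i
    rcases eq_or_ne (A i) 0 with h0 | h0
    · simp [h0, ENNReal.zero_rpow_of_pos hr0]
    · obtain ⟨n, hn1, hn2⟩ := ENNReal.exists_mem_Ico_zpow h0 (hAfin i) h12 h2t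
      have hcn : cond n i := by
        constructor
        · rw [ENNReal.rpow_intCast]; exact hn1
        · have he : (2:ℝ≥0∞) ^ ((n:ℝ)+1) = 2 ^ ((n:ℤ)+1) := by
            rw [← ENNReal.rpow_intCast]; push_cast; ring_nf
          rw [he]; exact hn2
      have hle := ENNReal.le_tsum
        (f := fun k : ℤ => (if cond k i then A i ^ r * volume (E i) else 0)) n
      rwa [if_pos hcn] at hle
  have h2 : ∑' i : ℕ, A i ^ r * volume (E i) ≤
      ∑' k : ℤ, ∑' i : ℕ, (if cond k i then A i ^ r * volume (E i) else 0) := by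
    rw [← ENNReal.tsum_comm]
    exact ENNReal.tsum_le_tsum h1
  have key : ∀ k : ℤ, (∑' i : ℕ, (if cond k i then A i ^ r * volume (E i) else 0))
      ≤ ∫⁻ x, (2:ℝ≥0∞) ^ ((k:ℝ)*(r-1) + (r+4)) *
          (if (2:ℝ≥0∞) ^ ((k:ℝ)-2) < N x then N x else 0) := by
    intro k
    set φ : ℝ → ℝ≥0∞ := fun x => if (2:ℝ≥0∞) ^ ((k:ℝ)-2) < N x then N x else 0 with hφdef
    have hφm : Measurable φ :=
      Measurable.ite (measurableSet_lt measurable_const hNm) hNm measurable_const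
    have hφle : ∀ x, φ x ≤ ((2:ℝ≥0∞) ^ (((k:ℝ)-2)*(r-1)))⁻¹ * N x ^ r := by
      intro x
      show (if (2:ℝ≥0∞) ^ ((k:ℝ)-2) < N x then N x else 0) ≤ _
      split_ifs with h
      · have hx0 : N x ≠ 0 := by
          intro hz; rw [hz] at h; exact (not_lt.mpr zero_le) h
        have hcr : (2:ℝ≥0∞) ^ (((k:ℝ)-2)*(r-1)) ≤ N x ^ (r-1) := by
          rw [ENNReal.rpow_mul]
          exact ENNReal.rpow_le_rpow h.le (by linarith)
        have hmul : N x * (2:ℝ≥0∞) ^ (((k:ℝ)-2)*(r-1)) ≤ N x ^ r := by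
          calc N x * 2 ^ (((k:ℝ)-2)*(r-1)) ≤ N x * N x ^ (r-1) := mul_le_mul_right hcr _
            _ = N x ^ r := by
              nth_rewrite 1 [← ENNReal.rpow_one (N x)]
              rw [← ENNReal.rpow_add _ _ hx0 (hNt x)]
              norm_num
        have := (ENNReal.le_div_iff_mul_le (Or.inl (h2pp _).ne') (Or.inl (h2pnt _))).mpr hmul
        rwa [div_eq_mul_inv, mul_comm] at this
      · exact zero_le
    have hφfin : ∫⁻ x, φ x ≠ ⊤ := by
      refine ne_top_of_le_ne_top ?_ (lintegral_mono hφle)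
      rw [lintegral_const_mul' _ _ (by simp [(h2pp (((k:ℝ)-2)*(r-1))).ne'])]
      exact ENNReal.mul_ne_top (by simp [(h2pp (((k:ℝ)-2)*(r-1))).ne']) hFr
    have hT : ∀ i ∈ {i | cond k i},
        (2:ℝ≥0∞)^((k:ℝ)-1) * ENNReal.ofReal (b i - a i)
          ≤ ∫⁻ t in Set.Icc (a i) (b i), φ t := by
      intro i hi
      have hA1 : (2:ℝ≥0∞)^((k:ℝ)) ≤ A i := hi.1
      have hI0 : ENNReal.ofReal (b i - a i) ≠ 0 := by
        intro hz
        have hvol0 : volume (Set.Icc (a i) (b i)) = 0 := by rw [hIvol i, hz]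
        have hz2 : (∫⁻ t in Set.Icc (a i) (b i), N t) = 0 := by
          rw [Measure.restrict_eq_zero.mpr hvol0]; simp
        have hA0 : A i = 0 := by simp [hAdef, hz2]
        rw [hA0] at hA1
        exact absurd (le_zero_iff.mp hA1) (h2pp _).ne'
      have hnum : (2:ℝ≥0∞)^((k:ℝ)) * ENNReal.ofReal (b i - a i)
          ≤ ∫⁻ t in Set.Icc (a i) (b i), N t :=
        (ENNReal.le_div_iff_mul_le (Or.inl hI0) (Or.inl (hIfin i))).mp hA1
      have hpt : ∀ x, N x ≤ φ x + (2:ℝ≥0∞)^((k:ℝ)-2) := by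
        intro x
        show N x ≤ (if (2:ℝ≥0∞) ^ ((k:ℝ)-2) < N x then N x else 0) + _
        split_ifs with h
        · exact le_self_add
        · simpa using (not_lt.mp h)
      have hsplit : (∫⁻ t in Set.Icc (a i) (b i), N t)
          ≤ (∫⁻ t in Set.Icc (a i) (b i), φ t)
            + (2:ℝ≥0∞)^((k:ℝ)-2) * ENNReal.ofReal (b i - a i) := by
        calc (∫⁻ t in Set.Icc (a i) (b i), N t)
            ≤ ∫⁻ t in Set.Icc (a i) (b i), (φ t + (2:ℝ≥0∞)^((k:ℝ)-2)) :=
              lintegral_mono hpt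
          _ = (∫⁻ t in Set.Icc (a i) (b i), φ t)
              + (2:ℝ≥0∞)^((k:ℝ)-2) * ENNReal.ofReal (b i - a i) := by
              rw [lintegral_add_right _ measurable_const, lintegral_const,
                Measure.restrict_apply_univ, hIvol i]
      have hsum2 : (2:ℝ≥0∞)^((k:ℝ)-1) + (2:ℝ≥0∞)^((k:ℝ)-2) ≤ (2:ℝ≥0∞)^((k:ℝ)) := by
        have e1 : (2:ℝ≥0∞)^((k:ℝ)) = (2:ℝ≥0∞)^((k:ℝ)-1) + (2:ℝ≥0∞)^((k:ℝ)-1) := by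
          have hk : (k:ℝ) = 1 + ((k:ℝ)-1) := by ring
          rw [hk, ENNReal.rpow_add _ _ h20 h2t, ENNReal.rpow_one, two_mul]
          ring_nf
        rw [e1]
        exact add_le_add_right
          (ENNReal.rpow_le_rpow_of_exponent_le h12.le (by linarith)) _
      have hchain : (2:ℝ≥0∞)^((k:ℝ)-1) * ENNReal.ofReal (b i - a i)
            + (2:ℝ≥0∞)^((k:ℝ)-2) * ENNReal.ofReal (b i - a i)
          ≤ (∫⁻ t in Set.Icc (a i) (b i), φ t)
            + (2:ℝ≥0∞)^((k:ℝ)-2) * ENNReal.ofReal (b i - a i) := by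
        calc (2:ℝ≥0∞)^((k:ℝ)-1) * ENNReal.ofReal (b i - a i)
              + (2:ℝ≥0∞)^((k:ℝ)-2) * ENNReal.ofReal (b i - a i)
            = ((2:ℝ≥0∞)^((k:ℝ)-1) + (2:ℝ≥0∞)^((k:ℝ)-2)) * ENNReal.ofReal (b i - a i) :=
              (add_mul _ _ _).symm
          _ ≤ (2:ℝ≥0∞)^((k:ℝ)) * ENNReal.ofReal (b i - a i) := mul_le_mul_left hsum2 _
          _ ≤ _ := hnum.trans hsplit
      exact (ENNReal.add_le_add_iff_right
        (ENNReal.mul_ne_top (h2pnt _) (hIfin i))).mp hchain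
    have hwk := weak_bound a b hab φ hφfin ((2:ℝ≥0∞)^((k:ℝ)-1))
      (h2pp _).ne' (h2pnt _) {i | cond k i} hT
    have hm' : ∀ i, MeasurableSet (if cond k i then E i else ∅) := by
      intro i; split_ifs; exacts [hEm i, MeasurableSet.empty]
    have hsubE : ∀ i, (if cond k i then E i else ∅) ⊆ E i := by
      intro i; split_ifs; exacts [subset_rfl, Set.empty_subset _]
    have hd' : Pairwise (Function.onFun Disjoint (fun i => if cond k i then E i else ∅)) :=
      fun i j hij => (hEdisj hij).mono (hsubE i) (hsubE j)
    have hstep : (∑' i : ℕ, (if cond k i then A i ^ r * volume (E i) else 0))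
        ≤ (2:ℝ≥0∞) ^ (((k:ℝ)+1)*r) * volume (⋃ i, if cond k i then E i else ∅) := by
      rw [measure_iUnion hd' hm', ← ENNReal.tsum_mul_left]
      refine ENNReal.tsum_le_tsum (fun i => ?_)
      split_ifs with h
      · refine mul_le_mul_left ?_ _
        rw [ENNReal.rpow_mul]
        exact ENNReal.rpow_le_rpow h.2.le (le_of_lt hr0)
      · simp
    have hsub : (⋃ i, if cond k i then E i else ∅)
        ⊆ ⋃ i ∈ {i | cond k i}, Set.Icc (a i) (b i) := by
      intro x hx
      simp only [Set.mem_iUnion] at hx ⊢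
      obtain ⟨i, hxi⟩ := hx
      by_cases h : cond k i
      · rw [if_pos h] at hxi; exact ⟨i, h, hEsub i hxi⟩
      · rw [if_neg h] at hxi; exact absurd hxi (Set.notMem_empty x)
    have hck : (2:ℝ≥0∞) ^ (((k:ℝ)+1)*r) * (8 / (2:ℝ≥0∞)^((k:ℝ)-1))
        = (2:ℝ≥0∞) ^ ((k:ℝ)*(r-1) + (r+4)) := by
      have h8 : (8:ℝ≥0∞) = 2 ^ (3:ℝ) := by
        rw [show (3:ℝ) = ((3:ℕ):ℝ) by norm_num, ENNReal.rpow_natCast]; norm_num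
      rw [h8, ← ENNReal.rpow_sub _ _ h20 h2t, ← ENNReal.rpow_add _ _ h20 h2t]
      congr 1; ring
    calc (∑' i : ℕ, (if cond k i then A i ^ r * volume (E i) else 0))
        ≤ (2:ℝ≥0∞) ^ (((k:ℝ)+1)*r) * volume (⋃ i, if cond k i then E i else ∅) := hstep
      _ ≤ (2:ℝ≥0∞) ^ (((k:ℝ)+1)*r) * (8 / (2:ℝ≥0∞)^((k:ℝ)-1) * ∫⁻ x, φ x) := by
          gcongr
          exact (measure_mono hsub).trans hwk
      _ = (2:ℝ≥0∞) ^ ((k:ℝ)*(r-1) + (r+4)) * ∫⁻ x, φ x := by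
          rw [← mul_assoc, hck]
      _ = ∫⁻ x, (2:ℝ≥0∞) ^ ((k:ℝ)*(r-1) + (r+4)) *
            (if (2:ℝ≥0∞) ^ ((k:ℝ)-2) < N x then N x else 0) :=
          (lintegral_const_mul' _ _ (h2pnt _)).symm
  calc ∑' i : ℕ, A i ^ r * volume (E i)
      ≤ ∑' k : ℤ, ∑' i : ℕ, (if cond k i then A i ^ r * volume (E i) else 0) := h2
    _ ≤ ∑' k : ℤ, ∫⁻ x, (2:ℝ≥0∞) ^ ((k:ℝ)*(r-1) + (r+4)) *
          (if (2:ℝ≥0∞) ^ ((k:ℝ)-2) < N x then N x else 0) := ENNReal.tsum_le_tsum key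
    _ = ∫⁻ x, ∑' k : ℤ, (2:ℝ≥0∞) ^ ((k:ℝ)*(r-1) + (r+4)) *
          (if (2:ℝ≥0∞) ^ ((k:ℝ)-2) < N x then N x else 0) := by
        rw [← lintegral_tsum]
        intro k
        exact (measurable_const.mul
          (Measurable.ite (measurableSet_lt measurable_const hNm) hNm measurable_const)).aemeasurable
    _ ≤ ∫⁻ x, c * N x ^ r := lintegral_mono (fun x => hgt (N x) (hNt x))
    _ = c * ∫⁻ x, N x ^ r := lintegral_const_mul' _ _ hc


/-- `L^p × L^q` bound for sparse forms. For every `η ∈ (0,1)` and dual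
exponents `1 < p < ∞`, `1/p + 1/q = 1`, there is a constant `C = C(p,η)` such that
for every `η`-sparse family of intervals `Icc (a i) (b i)` (with disjoint major sets
`E i`) and all `F ∈ L^p`, `G ∈ L^q`, the sparse form
`Σ_i ⟨|F|⟩_{I i} ⟨|G|⟩_{I i} |I i|` is at most `C ‖F‖_{L^p} ‖G‖_{L^q}`. -/
theorem stmt4 (η : ℝ) (hη0 : 0 < η) (hη1 : η < 1)
    (p q : ℝ≥0∞) (hp1 : 1 < p) (hpt : p ≠ ⊤) (hpq : 1 / p + 1 / q = 1) :
    ∃ C : ℝ≥0∞, C ≠ ⊤ ∧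
      ∀ (a b : ℕ → ℝ) (_ : ∀ i, a i ≤ b i) (E : ℕ → Set ℝ)
        (_ : ∀ i, MeasurableSet (E i))
        (_ : ∀ i, E i ⊆ Set.Icc (a i) (b i))
        (_ : Pairwise (Function.onFun Disjoint E))
        (_ : ∀ i, ENNReal.ofReal (η * (b i - a i)) ≤ volume (E i))
        (F G : ℝ → ℝ) (_ : Measurable F) (_ : Measurable G)
        (_ : MemLp F p volume) (_ : MemLp G q volume),
        (∑' i : ℕ,
          (∫⁻ t in Set.Icc (a i) (b i), (‖F t‖₊ : ℝ≥0∞)) *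
            (∫⁻ t in Set.Icc (a i) (b i), (‖G t‖₊ : ℝ≥0∞)) /
              ENNReal.ofReal (b i - a i))
          ≤ C * eLpNorm F p volume * eLpNorm G q volume := by
  classical
  -- facts about p and q
  have hp0 : p ≠ 0 := (zero_lt_one.trans hp1).ne'
  have hq0 : q ≠ 0 := by
    intro h
    rw [h] at hpq
    simp at hpq
  have hqt : q ≠ ⊤ := by
    intro h
    rw [h] at hpq
    simp at hpq
    exact hp1.ne' hpq
  have hq1 : 1 < q := by
    rcases lt_or_ge 1 q with h | h
    · exact h
    · exfalso
      have h1q : (1:ℝ≥0∞) ≤ 1/q := by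
        rw [one_div]
        exact ENNReal.one_le_inv.mpr h
      have h1p : (0:ℝ≥0∞) < 1/p := by
        simp [one_div, ENNReal.inv_pos, hpt]
      have hlt : (1:ℝ≥0∞) < 1 + 1/p := ENNReal.lt_add_right one_ne_top h1p.ne'
      have : (1:ℝ≥0∞) < 1/p + 1/q := by
        calc (1:ℝ≥0∞) < 1 + 1/p := hlt
          _ = 1/p + 1 := add_comm _ _
          _ ≤ 1/p + 1/q := add_le_add_right h1q _
      rw [hpq] at this
      exact lt_irrefl _ this
  set r : ℝ := p.toReal with hrdef
  set s : ℝ := q.toReal with hsdef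
  have hr1 : 1 < r := by
    rw [hrdef, ← ENNReal.toReal_one]
    exact ENNReal.toReal_lt_toReal (by simp) hpt |>.mpr hp1
  have hs1 : 1 < s := by
    rw [hsdef, ← ENNReal.toReal_one]
    exact ENNReal.toReal_lt_toReal (by simp) hqt |>.mpr hq1
  have hr0 : (0:ℝ) < r := by linarith
  have hs0 : (0:ℝ) < s := by linarith
  have hconj : r.HolderConjugate s := by
    refine Real.holderConjugate_iff.mpr ⟨hr1, ?_⟩
    have h1 := congrArg ENNReal.toReal hpq
    rw [ENNReal.toReal_add (by simp [one_div, hp0]) (by simp [one_div, hq0])] at h1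
    simpa [one_div, ENNReal.toReal_inv] using h1
  obtain ⟨CF, hCF, hcarF⟩ := carleson hr1
  obtain ⟨CG, hCG, hcarG⟩ := carleson hs1
  set η' : ℝ≥0∞ := ENNReal.ofReal η with hη'def
  have hη'0 : η' ≠ 0 := (ENNReal.ofReal_pos.mpr hη0).ne'
  have hη't : η' ≠ ⊤ := ENNReal.ofReal_ne_top
  refine ⟨η'⁻¹ * CF ^ (1/r) * CG ^ (1/s), ?_, ?_⟩
  · exact ENNReal.mul_ne_top (ENNReal.mul_ne_top (by simp [hη'0])
      (ENNReal.rpow_ne_top_of_nonneg (by positivity) hCF))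
      (ENNReal.rpow_ne_top_of_nonneg (by positivity) hCG)
  intro a b hab E hEm hEsub hEdisj hsp F G hF hG hFmem hGmem
  set NF : ℝ → ℝ≥0∞ := fun x => (‖F x‖₊ : ℝ≥0∞) with hNF
  set NG : ℝ → ℝ≥0∞ := fun x => (‖G x‖₊ : ℝ≥0∞) with hNG
  set AF : ℕ → ℝ≥0∞ := fun i =>
    (∫⁻ t in Set.Icc (a i) (b i), NF t) / ENNReal.ofReal (b i - a i) with hAF
  set AG : ℕ → ℝ≥0∞ := fun i =>
    (∫⁻ t in Set.Icc (a i) (b i), NG t) / ENNReal.ofReal (b i - a i) with hAG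
  have hIfin : ∀ i, ENNReal.ofReal (b i - a i) ≠ ⊤ := fun i => ENNReal.ofReal_ne_top
  have hEfin : ∀ i, volume (E i) ≠ ⊤ := by
    intro i
    refine ne_top_of_le_ne_top ?_ (measure_mono (hEsub i))
    rw [Real.volume_Icc]
    exact hIfin i
  -- step 1 : pointwise bound on each term
  have hstep1 : ∀ i,
      (∫⁻ t in Set.Icc (a i) (b i), NF t) * (∫⁻ t in Set.Icc (a i) (b i), NG t) /
          ENNReal.ofReal (b i - a i)
        ≤ η'⁻¹ * (AF i * AG i * volume (E i)) := by
    intro i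
    set I : ℝ≥0∞ := ENNReal.ofReal (b i - a i) with hI
    rcases eq_or_ne I 0 with h0 | h0
    · have hvol0 : volume (Set.Icc (a i) (b i)) = 0 := by rw [Real.volume_Icc, ← hI, h0]
      have hX : (∫⁻ t in Set.Icc (a i) (b i), NF t) = 0 := by
        rw [Measure.restrict_eq_zero.mpr hvol0]; simp
      rw [hX]
      simp
    · have hIle : I ≤ η'⁻¹ * volume (E i) := by
        have hmul : I * η' ≤ volume (E i) := by
          rw [mul_comm, hη'def, hI, ← ENNReal.ofReal_mul hη0.le]
          exact hsp i
        have h2 := (ENNReal.le_div_iff_mul_le (Or.inl hη'0) (Or.inl hη't)).mpr hmul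
        rwa [div_eq_mul_inv, mul_comm] at h2
      have hid : AF i * AG i * I
          = (∫⁻ t in Set.Icc (a i) (b i), NF t) * (∫⁻ t in Set.Icc (a i) (b i), NG t) / I := by
        rw [hAF, hAG]
        simp only []
        rw [div_eq_mul_inv, div_eq_mul_inv, div_eq_mul_inv]
        have hcan : I⁻¹ * I = 1 := ENNReal.inv_mul_cancel h0 (hIfin i)
        calc (∫⁻ t in Set.Icc (a i) (b i), NF t) * I⁻¹ *
              ((∫⁻ t in Set.Icc (a i) (b i), NG t) * I⁻¹) * I
            = (∫⁻ t in Set.Icc (a i) (b i), NF t) * (∫⁻ t in Set.Icc (a i) (b i), NG t) * I⁻¹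
              * (I⁻¹ * I) := by ring
          _ = (∫⁻ t in Set.Icc (a i) (b i), NF t) * (∫⁻ t in Set.Icc (a i) (b i), NG t) * I⁻¹ := by
              rw [hcan, mul_one]
      calc (∫⁻ t in Set.Icc (a i) (b i), NF t) * (∫⁻ t in Set.Icc (a i) (b i), NG t) / I
          = AF i * AG i * I := hid.symm
        _ ≤ AF i * AG i * (η'⁻¹ * volume (E i)) := mul_le_mul_right hIle _
        _ = η'⁻¹ * (AF i * AG i * volume (E i)) := by ring
  have hinv : 1/r + 1/s = 1 := by
    rw [one_div, one_div]; exact hconj.inv_add_inv_eq_one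
  have hprod : ∀ i, AF i * AG i * volume (E i)
      = (AF i * volume (E i) ^ (1/r)) * (AG i * volume (E i) ^ (1/s)) := by
    intro i
    have hv : volume (E i) ^ (1/r) * volume (E i) ^ (1/s) = volume (E i) := by
      rw [← ENNReal.rpow_add_of_nonneg _ _ (by positivity) (by positivity), hinv,
        ENNReal.rpow_one]
    calc AF i * AG i * volume (E i)
        = AF i * AG i * (volume (E i) ^ (1/r) * volume (E i) ^ (1/s)) := by rw [hv]
      _ = (AF i * volume (E i) ^ (1/r)) * (AG i * volume (E i) ^ (1/s)) := by ring
  have hpowF : ∀ i, (AF i * volume (E i) ^ (1/r)) ^ r = AF i ^ r * volume (E i) := by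
    intro i
    rw [ENNReal.mul_rpow_of_nonneg _ _ hr0.le, ← ENNReal.rpow_mul, one_div,
      inv_mul_cancel₀ hr0.ne', ENNReal.rpow_one]
  have hpowG : ∀ i, (AG i * volume (E i) ^ (1/s)) ^ s = AG i ^ s * volume (E i) := by
    intro i
    rw [ENNReal.mul_rpow_of_nonneg _ _ hs0.le, ← ENNReal.rpow_mul, one_div,
      inv_mul_cancel₀ hs0.ne', ENNReal.rpow_one]
  have hhold : ∑' i : ℕ, AF i * AG i * volume (E i)
      ≤ (∑' i : ℕ, AF i ^ r * volume (E i)) ^ (1/r) *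
        (∑' i : ℕ, AG i ^ s * volume (E i)) ^ (1/s) := by
    have hH := ENNReal.lintegral_mul_le_Lp_mul_Lq (Measure.count : Measure ℕ) hconj
      (f := fun i => AF i * volume (E i) ^ (1/r)) (g := fun i => AG i * volume (E i) ^ (1/s))
      ((measurable_of_countable _).aemeasurable) ((measurable_of_countable _).aemeasurable)
    simp only [Pi.mul_apply] at hH
    rw [lintegral_count, lintegral_count, lintegral_count] at hH
    calc ∑' i : ℕ, AF i * AG i * volume (E i)
        = ∑' i : ℕ, (AF i * volume (E i) ^ (1/r)) * (AG i * volume (E i) ^ (1/s)) :=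
          tsum_congr hprod
      _ ≤ (∑' i : ℕ, (AF i * volume (E i) ^ (1/r)) ^ r) ^ (1/r) *
          (∑' i : ℕ, (AG i * volume (E i) ^ (1/s)) ^ s) ^ (1/s) := hH
      _ = (∑' i : ℕ, AF i ^ r * volume (E i)) ^ (1/r) *
          (∑' i : ℕ, AG i ^ s * volume (E i)) ^ (1/s) := by
          rw [tsum_congr hpowF, tsum_congr hpowG]
  -- identify the L^p norms
  have hFr : (∫⁻ x, NF x ^ r) = (eLpNorm F p volume) ^ r := by
    rw [eLpNorm_eq_lintegral_rpow_enorm_toReal hp0 hpt, ← ENNReal.rpow_mul, one_div,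
      inv_mul_cancel₀ hr0.ne', ENNReal.rpow_one]
    rfl
  have hGs : (∫⁻ x, NG x ^ s) = (eLpNorm G q volume) ^ s := by
    rw [eLpNorm_eq_lintegral_rpow_enorm_toReal hq0 hqt, ← ENNReal.rpow_mul, one_div,
      inv_mul_cancel₀ hs0.ne', ENNReal.rpow_one]
    rfl
  have hFne : (∫⁻ x, NF x ^ r) ≠ ⊤ := by
    rw [hFr]; exact ENNReal.rpow_ne_top_of_nonneg hr0.le hFmem.2.ne
  have hGne : (∫⁻ x, NG x ^ s) ≠ ⊤ := by
    rw [hGs]; exact ENNReal.rpow_ne_top_of_nonneg hs0.le hGmem.2.ne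
  have hcF := hcarF a b hab E hEm hEsub hEdisj F hF hFne
  have hcG := hcarG a b hab E hEm hEsub hEdisj G hG hGne
  have hboundF : (∑' i : ℕ, AF i ^ r * volume (E i)) ^ (1/r)
      ≤ CF ^ (1/r) * eLpNorm F p volume := by
    calc (∑' i : ℕ, AF i ^ r * volume (E i)) ^ (1/r)
        ≤ (CF * (eLpNorm F p volume) ^ r) ^ (1/r) := by
          apply ENNReal.rpow_le_rpow _ (by positivity)
          rw [← hFr]
          exact hcF
      _ = CF ^ (1/r) * eLpNorm F p volume := by
          rw [ENNReal.mul_rpow_of_nonneg _ _ (by positivity), ← ENNReal.rpow_mul,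
            mul_one_div, div_self hr0.ne', ENNReal.rpow_one]
  have hboundG : (∑' i : ℕ, AG i ^ s * volume (E i)) ^ (1/s)
      ≤ CG ^ (1/s) * eLpNorm G q volume := by
    calc (∑' i : ℕ, AG i ^ s * volume (E i)) ^ (1/s)
        ≤ (CG * (eLpNorm G q volume) ^ s) ^ (1/s) := by
          apply ENNReal.rpow_le_rpow _ (by positivity)
          rw [← hGs]
          exact hcG
      _ = CG ^ (1/s) * eLpNorm G q volume := by
          rw [ENNReal.mul_rpow_of_nonneg _ _ (by positivity), ← ENNReal.rpow_mul,
            mul_one_div, div_self hs0.ne', ENNReal.rpow_one]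
  calc (∑' i : ℕ,
          (∫⁻ t in Set.Icc (a i) (b i), (‖F t‖₊ : ℝ≥0∞)) *
            (∫⁻ t in Set.Icc (a i) (b i), (‖G t‖₊ : ℝ≥0∞)) /
              ENNReal.ofReal (b i - a i))
      ≤ ∑' i : ℕ, η'⁻¹ * (AF i * AG i * volume (E i)) := ENNReal.tsum_le_tsum hstep1
    _ = η'⁻¹ * ∑' i : ℕ, AF i * AG i * volume (E i) := ENNReal.tsum_mul_left
    _ ≤ η'⁻¹ * ((∑' i : ℕ, AF i ^ r * volume (E i)) ^ (1/r) *
          (∑' i : ℕ, AG i ^ s * volume (E i)) ^ (1/s)) := mul_le_mul_right hhold _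
    _ ≤ η'⁻¹ * ((CF ^ (1/r) * eLpNorm F p volume) * (CG ^ (1/s) * eLpNorm G q volume)) := by
        gcongr
    _ = η'⁻¹ * CF ^ (1/r) * CG ^ (1/s) * eLpNorm F p volume * eLpNorm G q volume := by
        ring
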